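/- Let ξ_1, …, ξ_n be independent real random variables with the setup of the preceding context, S their sum, S̄ the sum of the ξ̄_i, and suppose ξ̄_i ≤ ξ_i a.s. with ξ̄_i = ξ_i on {ξ_i ≤ w}. For y ∈ ℝ define Q(z,y) := max_i P(S − ξ_i > z − y, max_{j≠i} ξ_j ≤ y) and Q_*(z,y) := max(Q(z,y), P(S > z, max_j ξ_j ≤ y)). Then for all z and all y > w: P(S > z) − P(S̄ > z) ≤ P(max_i ξ_i > y) + 2·Q_*(z,y)·P(max_i ξ_i > w). -/

import Mathlib

open MeasureTheory ProbabilityTheory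

lemma prod_mul_sum_le {α : Type*} [DecidableEq α] (s : Finset α) (p : α → ℝ)
    (h0 : ∀ i, 0 ≤ p i) (h1 : ∀ i, p i ≤ 1) :
    (∏ i ∈ s, (1 - p i)) * (∑ i ∈ s, p i) ≤ 1 - ∏ i ∈ s, (1 - p i) := by
  induction s using Finset.induction_on with
  | empty => simp
  | @insert a s ha ih =>
    rw [Finset.prod_insert ha, Finset.sum_insert ha]
    have hP0 : 0 ≤ ∏ i ∈ s, (1 - p i) := Finset.prod_nonneg fun i _ => by linarith [h1 i]
    have hP1 : ∏ i ∈ s, (1 - p i) ≤ 1 :=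
      Finset.prod_le_one (fun i _ => by linarith [h1 i]) (fun i _ => by linarith [h0 i])
    have hS0 : 0 ≤ ∑ i ∈ s, p i := Finset.sum_nonneg fun i _ => h0 i
    have hpa : (0:ℝ) ≤ 1 - p a := by linarith [h1 a]
    nlinarith [mul_le_mul_of_nonneg_left ih hpa, mul_nonneg hP0 (h0 a), mul_nonneg (h0 a) (by linarith : (0:ℝ) ≤ 1 - ∏ i ∈ s, (1 - p i))]

theorem stmt_11 {Ω : Type*} [MeasurableSpace Ω] (μ : Measure Ω) [IsProbabilityMeasure μ]
    (n : ℕ) (hn : 0 < n) (ξ ξbar : Fin n → Ω → ℝ) (hmeas : ∀ i, Measurable (ξ i))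
    (hind : iIndepFun ξ μ)
    (w y : ℝ) (hwy : w < y)
    (heq : ∀ i ω, ξ i ω ≤ w → ξbar i ω = ξ i ω)
    (hle : ∀ᵐ ω ∂μ, ∀ i, ξbar i ω ≤ min (ξ i ω) w)
    (z : ℝ)
    (Q Qstar : ℝ)
    (hQ : Q = (Finset.univ.sup' (Finset.univ_nonempty_iff.mpr (Fin.pos_iff_nonempty.mp hn))
      fun i => (μ {ω | z - y < (∑ j, ξ j ω) - ξ i ω ∧ ∀ j ≠ i, ξ j ω ≤ y}).toReal))
    (hQs : Qstar = max Q (μ {ω | z < ∑ j, ξ j ω ∧ ∀ j, ξ j ω ≤ y}).toReal) :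
    (μ {ω | z < ∑ i, ξ i ω}).toReal - (μ {ω | z < ∑ i, ξbar i ω}).toReal ≤
      (μ {ω | ∃ i, y < ξ i ω}).toReal + 2 * Qstar * (μ {ω | ∃ i, w < ξ i ω}).toReal := by
  classical
  set A : Set Ω := {ω | z < ∑ i, ξ i ω} with hA
  set Sb : Set Ω := {ω | z < ∑ i, ξbar i ω} with hSb
  set Y : Set Ω := {ω | ∃ i, y < ξ i ω} with hY
  set W : Set Ω := {ω | ∃ i, w < ξ i ω} with hW
  set X : Set Ω := {ω | (z < ∑ j, ξ j ω ∧ ∀ j, ξ j ω ≤ y) ∧ ∃ i, w < ξ i ω} with hX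
  set AY : Set Ω := {ω | z < ∑ j, ξ j ω ∧ ∀ j, ξ j ω ≤ y} with hAY
  -- Step 1: a.e. inclusion
  have hsub : ∀ᵐ ω ∂μ, ω ∈ A → ω ∈ Sb ∪ (Y ∪ X) := by
    filter_upwards [hle] with ω hω
    intro hAω
    simp only [Set.mem_union]
    by_cases hw : ∃ i, w < ξ i ω
    · by_cases hy : ∃ i, y < ξ i ω
      · exact Or.inr (Or.inl hy)
      · push_neg at hy
        exact Or.inr (Or.inr ⟨⟨hAω, hy⟩, hw⟩)
    · push_neg at hw
      left
      show z < ∑ i, ξbar i ω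
      have : ∑ i, ξbar i ω = ∑ i, ξ i ω := Finset.sum_congr rfl fun i _ => heq i ω (hw i)
      rw [this]; exact hAω
  have h1 : μ A ≤ μ Sb + μ Y + μ X := by
    calc μ A ≤ μ (Sb ∪ (Y ∪ X)) := measure_mono_ae hsub
    _ ≤ μ Sb + μ (Y ∪ X) := measure_union_le _ _
    _ ≤ μ Sb + (μ Y + μ X) := by gcongr; exact measure_union_le _ _
    _ = μ Sb + μ Y + μ X := (add_assoc _ _ _).symm
  have h1r : (μ A).toReal ≤ (μ Sb).toReal + (μ Y).toReal + (μ X).toReal := by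
    rw [← ENNReal.toReal_add (measure_ne_top μ _) (measure_ne_top μ _),
      ← ENNReal.toReal_add (by finiteness) (measure_ne_top μ _)]
    exact ENNReal.toReal_mono (by finiteness) h1
  -- main bound on X
  have hQs0 : 0 ≤ Qstar := le_trans ENNReal.toReal_nonneg (hQs ▸ le_max_right _ _)
  have key : (μ X).toReal ≤ 2 * Qstar * (μ W).toReal := by
    by_cases hcase : 1/2 ≤ (μ W).toReal
    · have hXAY : μ X ≤ μ AY := measure_mono fun ω hω => hω.1
      have h2 : (μ X).toReal ≤ Qstar := by
        refine le_trans (ENNReal.toReal_mono (measure_ne_top μ _) hXAY) ?_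
        exact hQs ▸ le_max_right _ _
      nlinarith
    · push_neg at hcase
      set p : Fin n → ℝ := fun i => (μ {ω | w < ξ i ω}).toReal with hp
      have hp0 : ∀ i, 0 ≤ p i := fun i => ENNReal.toReal_nonneg
      have hp1 : ∀ i, p i ≤ 1 := fun i => by
        simpa using ENNReal.toReal_mono (by finiteness) (prob_le_one (μ := μ) (s := {ω | w < ξ i ω}))
      -- μ W = 1 - ∏ (1 - p i)
      have hWc : W = (⋂ i, {ω | ξ i ω ≤ w})ᶜ := by
        ext ω; simp [hW, not_forall, not_le]
      have hWmeas : MeasurableSet (⋂ i, {ω | ξ i ω ≤ w}) :=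
        MeasurableSet.iInter fun i => measurableSet_le (hmeas i) measurable_const
      have hprod : μ (⋂ i, {ω | ξ i ω ≤ w}) = ∏ i, μ {ω | ξ i ω ≤ w} := by
        refine hind.meas_iInter fun i => ⟨Set.Iic w, measurableSet_Iic, rfl⟩
      have hcompl : ∀ i, (μ {ω | ξ i ω ≤ w}).toReal = 1 - p i := by
        intro i
        have hset : {ω | ξ i ω ≤ w} = {ω | w < ξ i ω}ᶜ := by ext ω; simp [not_lt]
        have hm : MeasurableSet {ω | w < ξ i ω} := measurableSet_lt measurable_const (hmeas i)
        rw [hset, prob_compl_eq_one_sub hm,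
          ENNReal.toReal_sub_of_le prob_le_one (by finiteness)]
        simp [hp]
      have hWr : (μ W).toReal = 1 - ∏ i, (1 - p i) := by
        rw [hWc, prob_compl_eq_one_sub hWmeas,
          ENNReal.toReal_sub_of_le prob_le_one (by finiteness), hprod,
          ENNReal.toReal_prod]
        simp only [hcompl, ENNReal.toReal_one]
      have hPhalf : 1/2 < ∏ i, (1 - p i) := by rw [hWr] at hcase; linarith
      have hsum : ∑ i, p i ≤ 2 * (μ W).toReal := by
        have := prod_mul_sum_le Finset.univ p hp0 hp1
        have hS0 : 0 ≤ ∑ i, p i := Finset.sum_nonneg fun i _ => hp0 i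
        rw [hWr]
        nlinarith
      -- union bound with independence
      set B : Fin n → Set Ω := fun i =>
        {ω | z - y < (∑ j, ξ j ω) - ξ i ω ∧ ∀ j ≠ i, ξ j ω ≤ y} with hB
      set C : Fin n → Set Ω := fun i => {ω | w < ξ i ω} with hC
      have hXsub : X ⊆ ⋃ i, (B i ∩ C i) := by
        rintro ω ⟨⟨hz, hy⟩, i, hwi⟩
        refine Set.mem_iUnion.2 ⟨i, ⟨⟨?_, fun j _ => hy j⟩, hwi⟩⟩
        have := hy i
        linarith
      have hindep : ∀ i, μ (B i ∩ C i) = μ (B i) * μ (C i) := by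
        intro i
        have hdisj : Disjoint ({i} : Finset (Fin n)) (Finset.univ.erase i) := by simp
        have hIF := hind.indepFun_finset {i} (Finset.univ.erase i) hdisj hmeas
        have hCpre : C i = (fun a (j : ({i} : Finset (Fin n))) => ξ (↑j) a) ⁻¹'
            {v | w < v ⟨i, Finset.mem_singleton_self i⟩} := rfl
        have hBpre : B i = (fun a (j : ↥(Finset.univ.erase i)) => ξ (↑j) a) ⁻¹'
            {v | z - y < ∑ j, v j ∧ ∀ j, v j ≤ y} := by
          ext ω
          simp only [hB, Set.mem_setOf_eq, Set.mem_preimage]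
          have hsum : ∑ j : ↥(Finset.univ.erase i), ξ (↑j) ω
              = (∑ j, ξ j ω) - ξ i ω := by
            rw [Finset.sum_coe_sort (Finset.univ.erase i) (fun j => ξ j ω),
              Finset.sum_erase_eq_sub (Finset.mem_univ i)]
          rw [hsum]
          constructor
          · rintro ⟨h1, h2⟩
            exact ⟨h1, fun j => h2 j (Finset.mem_erase.mp j.2).1⟩
          · rintro ⟨h1, h2⟩
            exact ⟨h1, fun j hj => h2 ⟨j, Finset.mem_erase.mpr ⟨hj, Finset.mem_univ j⟩⟩⟩
        have mC : MeasurableSet {v : ({i} : Finset (Fin n)) → ℝ |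
            w < v ⟨i, Finset.mem_singleton_self i⟩} :=
          measurableSet_lt measurable_const (measurable_pi_apply _)
        have mB : MeasurableSet {v : ↥(Finset.univ.erase i) → ℝ |
            z - y < ∑ j, v j ∧ ∀ j, v j ≤ y} := by
          have h1 : MeasurableSet {v : ↥(Finset.univ.erase i) → ℝ | z - y < ∑ j, v j} :=
            measurableSet_lt measurable_const
              (Finset.measurable_sum Finset.univ fun j _ => measurable_pi_apply j)
          have h2 : MeasurableSet {v : ↥(Finset.univ.erase i) → ℝ | ∀ j, v j ≤ y} := by
            have heq2 : {v : ↥(Finset.univ.erase i) → ℝ | ∀ j, v j ≤ y}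
                = ⋂ j, {v | v j ≤ y} := by ext v; simp
            rw [heq2]
            exact MeasurableSet.iInter fun j =>
              measurableSet_le (measurable_pi_apply j) measurable_const
          exact h1.inter h2
        rw [hBpre, hCpre, Set.inter_comm,
          hIF.measure_inter_preimage_eq_mul _ _ mC mB, mul_comm]
      have hXle : μ X ≤ ∑ i, μ (B i) * μ (C i) := by
        calc μ X ≤ μ (⋃ i, B i ∩ C i) := measure_mono hXsub
        _ ≤ ∑ i, μ (B i ∩ C i) := measure_iUnion_fintype_le _ _
        _ = ∑ i, μ (B i) * μ (C i) := Finset.sum_congr rfl fun i _ => hindep i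
      have hfin : ∀ i : Fin n, μ (B i) * μ (C i) ≠ ⊤ := fun i =>
        ENNReal.mul_ne_top (measure_ne_top μ _) (measure_ne_top μ _)
      have hsumfin : (∑ i, μ (B i) * μ (C i)) ≠ ⊤ := by
        rw [ENNReal.sum_ne_top]; exact fun i _ => hfin i
      have hXr : (μ X).toReal ≤ ∑ i, (μ (B i)).toReal * p i := by
        have h := ENNReal.toReal_mono hsumfin hXle
        rw [ENNReal.toReal_sum (fun i _ => hfin i)] at h
        simpa only [ENNReal.toReal_mul] using h
      have hQB : ∀ i, (μ (B i)).toReal ≤ Q := fun i =>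
        hQ ▸ Finset.le_sup' (fun i => (μ (B i)).toReal) (Finset.mem_univ i)
      have hQ0 : 0 ≤ Q := le_trans ENNReal.toReal_nonneg (hQB ⟨0, hn⟩)
      have hQQs : Q ≤ Qstar := hQs ▸ le_max_left _ _
      calc (μ X).toReal ≤ ∑ i, (μ (B i)).toReal * p i := hXr
      _ ≤ ∑ i, Q * p i := Finset.sum_le_sum fun i _ => mul_le_mul_of_nonneg_right (hQB i) (hp0 i)
      _ = Q * ∑ i, p i := by rw [Finset.mul_sum]
      _ ≤ Q * (2 * (μ W).toReal) := mul_le_mul_of_nonneg_left hsum hQ0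
      _ ≤ Qstar * (2 * (μ W).toReal) := by
          apply mul_le_mul_of_nonneg_right hQQs
          positivity
      _ = 2 * Qstar * (μ W).toReal := by ring
  linarith
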